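/- Let ε ∈ [0,1) and α_ε = (1-ε)/(1+ε). In the ε-induced abstraction setting where (1-ε)³·ρᴬ/G ≤ ρ ≤ (1+ε)³·ρᴬ/G and (1-ε)³·ρ'ᴬ/G ≤ ρ' ≤ (1+ε)³·ρ'ᴬ/G with ρᴬ = N̂ᴬ/n̂ᴬ, ρ'ᴬ = (N̂ᴬ+1)/(n̂ᴬ+1), 0 < ρ < ρ' and (1+ε)³ρ'ᴬ/G < 1, the ground pseudo-count N̂ = ρ(1-ρ')/(ρ'-ρ) satisfies N̂ᴬ·f ≤ N̂ ≤ N̂ᴬ·g, where f = (G(n̂ᴬ+1) - (1+ε)³(N̂ᴬ+1))/(G(n̂ᴬ/α_ε³ - N̂ᴬ + (1/α_ε³ - 1)n̂ᴬN̂ᴬ)) and g = (G(n̂ᴬ+1) - (1-ε)³(N̂ᴬ+1))/(G(α_ε³n̂ᴬ - N̂ᴬ - (1-α_ε³)n̂ᴬN̂ᴬ)), provided the denominators are positive. -/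

import Mathlib

lemma mono_F {x x' y y' : ℝ} (hx : 0 ≤ x) (hxx' : x ≤ x') (hx'y : x' < y)
    (hyy' : y ≤ y') (hy' : y' < 1) :
    x * (1 - y') / (y' - x) ≤ x' * (1 - y) / (y - x') := by
  have h1 : 0 < y' - x := by linarith
  have h2 : 0 < y - x' := by linarith
  rw [div_le_div_iff₀ h1 h2]
  nlinarith [mul_nonneg (mul_nonneg (sub_nonneg.2 hxx') (by linarith : (0:ℝ) ≤ y'))
      (by linarith : (0:ℝ) ≤ 1 - y),
    mul_nonneg (mul_nonneg hx (sub_nonneg.2 hyy')) (by linarith : (0:ℝ) ≤ 1 - x')]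

theorem eps_abstraction_pseudo_count_bounds
    (ε : ℝ) (hε0 : 0 ≤ ε) (hε1 : ε < 1)
    (G : ℕ) (hG : 1 ≤ G) (NA nA ρ ρ' : ℝ)
    (hNA : 0 ≤ NA) (hNAnA : NA < nA)
    (hρ0 : 0 < ρ) (hρρ' : ρ < ρ')
    (hlo : (1 - ε) ^ 3 * ((NA / nA) / (G : ℝ)) ≤ ρ)
    (hhi : ρ ≤ (1 + ε) ^ 3 * ((NA / nA) / (G : ℝ)))
    (hlo' : (1 - ε) ^ 3 * (((NA + 1) / (nA + 1)) / (G : ℝ)) ≤ ρ')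
    (hhi' : ρ' ≤ (1 + ε) ^ 3 * (((NA + 1) / (nA + 1)) / (G : ℝ)))
    (hlt1 : (1 + ε) ^ 3 * (((NA + 1) / (nA + 1)) / (G : ℝ)) < 1)
    (hdenf : 0 < (G : ℝ) * (nA / ((1 - ε) / (1 + ε)) ^ 3 - NA +
      (1 / ((1 - ε) / (1 + ε)) ^ 3 - 1) * nA * NA))
    (hdeng : 0 < (G : ℝ) * (((1 - ε) / (1 + ε)) ^ 3 * nA - NA -
      (1 - ((1 - ε) / (1 + ε)) ^ 3) * nA * NA)) :
    NA * (((G : ℝ) * (nA + 1) - (1 + ε) ^ 3 * (NA + 1)) /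
        ((G : ℝ) * (nA / ((1 - ε) / (1 + ε)) ^ 3 - NA +
          (1 / ((1 - ε) / (1 + ε)) ^ 3 - 1) * nA * NA)))
      ≤ ρ * (1 - ρ') / (ρ' - ρ) ∧
    ρ * (1 - ρ') / (ρ' - ρ)
      ≤ NA * (((G : ℝ) * (nA + 1) - (1 - ε) ^ 3 * (NA + 1)) /
        ((G : ℝ) * (((1 - ε) / (1 + ε)) ^ 3 * nA - NA -
          (1 - ((1 - ε) / (1 + ε)) ^ 3) * nA * NA))) := by
  have hnA : 0 < nA := lt_of_le_of_lt hNA hNAnA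
  have hnA1 : (0:ℝ) < nA + 1 := by linarith
  have hG0 : (0:ℝ) < G := by exact_mod_cast Nat.lt_of_lt_of_le Nat.zero_lt_one hG
  have ha : (0:ℝ) < (1 - ε) ^ 3 := by
    have : (0:ℝ) < 1 - ε := by linarith
    positivity
  have hb : (0:ℝ) < (1 + ε) ^ 3 := by positivity
  set x₀ := (1 - ε) ^ 3 * ((NA / nA) / (G : ℝ)) with hx₀
  set y₀ := (1 + ε) ^ 3 * (((NA + 1) / (nA + 1)) / (G : ℝ)) with hy₀
  set x₁ := (1 + ε) ^ 3 * ((NA / nA) / (G : ℝ)) with hx₁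
  set y₁ := (1 - ε) ^ 3 * (((NA + 1) / (nA + 1)) / (G : ℝ)) with hy₁
  have hx₀0 : 0 ≤ x₀ := by
    rw [hx₀]; positivity
  -- extract positivity facts from the denominators
  have hdf : 0 < (G:ℝ) * (nA / ((1 - ε) / (1 + ε)) ^ 3 - NA +
      (1 / ((1 - ε) / (1 + ε)) ^ 3 - 1) * nA * NA) := hdenf
  have hdg : 0 < (G:ℝ) * (((1 - ε) / (1 + ε)) ^ 3 * nA - NA -
      (1 - ((1 - ε) / (1 + ε)) ^ 3) * nA * NA) := hdeng
  -- key inequality for the g side: a*nA*(NA+1) > b*NA*(nA+1)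
  have keyg : 0 < (1-ε)^3 * nA * (NA+1) - (1+ε)^3 * NA * (nA+1) := by
    have h2 : 0 < ((1 - ε) / (1 + ε)) ^ 3 * nA - NA -
        (1 - ((1 - ε) / (1 + ε)) ^ 3) * nA * NA := by
      have := div_pos hdeng hG0
      rwa [mul_div_cancel_left₀ _ (ne_of_gt hG0)] at this
    have hbne : (1 + ε) ≠ 0 := by positivity
    have this1 := mul_pos h2 hb
    have e' : (((1 - ε) / (1 + ε)) ^ 3 * nA - NA -
        (1 - ((1 - ε) / (1 + ε)) ^ 3) * nA * NA) * (1 + ε)^3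
        = (1-ε)^3 * nA * (NA+1) - (1+ε)^3 * NA * (nA+1) := by
      field_simp
      ring
    rw [e'] at this1
    linarith
  have hx₁y₁ : x₁ < y₁ := by
    have e : y₁ - x₁ = ((1-ε)^3 * nA * (NA+1) - (1+ε)^3 * NA * (nA+1)) /
        (nA * (nA + 1) * (G:ℝ)) := by
      rw [hx₁, hy₁]
      field_simp
    have : 0 < y₁ - x₁ := by
      rw [e]; exact div_pos keyg (by positivity)
    linarith
  have hρ'1 : ρ' < 1 := lt_of_le_of_lt hhi' hlt1
  -- the two extreme-value equalities
  have e₁ : NA * (((G : ℝ) * (nA + 1) - (1 + ε) ^ 3 * (NA + 1)) /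
        ((G : ℝ) * (nA / ((1 - ε) / (1 + ε)) ^ 3 - NA +
          (1 / ((1 - ε) / (1 + ε)) ^ 3 - 1) * nA * NA)))
      = x₀ * (1 - y₀) / (y₀ - x₀) := by
    have hsub : (0:ℝ) < y₀ - x₀ := by
      have : x₀ < y₀ := lt_of_le_of_lt hlo (lt_of_lt_of_le hρρ' hhi')
      linarith
    rw [mul_div_assoc', div_eq_div_iff (ne_of_gt hdenf) (ne_of_gt hsub), hx₀, hy₀, div_pow]
    have hane : (1 - ε) ≠ 0 := ne_of_gt (by linarith)
    field_simp
    ring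
  have e₂ : NA * (((G : ℝ) * (nA + 1) - (1 - ε) ^ 3 * (NA + 1)) /
        ((G : ℝ) * (((1 - ε) / (1 + ε)) ^ 3 * nA - NA -
          (1 - ((1 - ε) / (1 + ε)) ^ 3) * nA * NA)))
      = x₁ * (1 - y₁) / (y₁ - x₁) := by
    rw [mul_div_assoc', div_eq_div_iff (ne_of_gt hdeng) (ne_of_gt (sub_pos.2 hx₁y₁)), hx₁, hy₁, div_pow]
    field_simp
    ring
  constructor
  · rw [e₁]
    exact mono_F hx₀0 hlo hρρ' hhi' hlt1
  · rw [e₂]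
    exact mono_F (le_of_lt hρ0) hhi hx₁y₁ hlo' hρ'1
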